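/- arXiv:2401.17184 — 5 statements merged into one kernel-verified Lean document; each statement's English description precedes it below -/
import Mathlib

section
/- Let Δ > 0. Then for all real i ≤ 0 and all real r with 0 ≤ r < Δ, the first-order Taylor remainder of Φ⁺ satisfies 0 ≤ E⁺(i, r) ≤ E⁺(0, Δ); in particular |Φ⁺(i − r) − (Φ⁺(i) − r·(Φ⁺)'(i))| ≤ Φ⁺(−Δ) − Φ⁺(0) + Δ·(Φ⁺)'(0). -/
/-- Φ⁺(x) = log₂(1 + 2^x) -/
noncomputable def Phip (x : ℝ) : ℝ := Real.logb 2 (1 + (2:ℝ) ^ x)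

/-- (Φ⁺)'(x) = 2^x / (2^x + 1) -/
noncomputable def dPhip (x : ℝ) : ℝ := (2:ℝ) ^ x / ((2:ℝ) ^ x + 1)

/-- First-order Taylor remainder E⁺(i, r) = Φ⁺(i − r) − Φ⁺(i) + r·(Φ⁺)'(i) -/
noncomputable def Ep (i r : ℝ) : ℝ := Phip (i - r) - Phip i + r * dPhip i
noncomputable def ddPhip (x : ℝ) : ℝ := (2:ℝ) ^ x * Real.log 2 / ((2:ℝ) ^ x + 1) ^ 2

lemma two_rpow_pos (x : ℝ) : 0 < (2:ℝ) ^ x := Real.rpow_pos_of_pos two_pos x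

lemma hasDerivAt_two_rpow (x : ℝ) :
    HasDerivAt (fun y : ℝ => (2:ℝ) ^ y) ((2:ℝ) ^ x * Real.log 2) x :=
  (Real.hasStrictDerivAt_const_rpow two_pos x).hasDerivAt

lemma hasDerivAt_Phip (x : ℝ) : HasDerivAt Phip (dPhip x) x := by
  have h2 : HasDerivAt (fun y : ℝ => 1 + (2:ℝ) ^ y) ((2:ℝ) ^ x * Real.log 2) x :=
    (hasDerivAt_two_rpow x).const_add 1
  have hpos : (0:ℝ) < 1 + (2:ℝ) ^ x := by have := two_rpow_pos x; linarith
  have h3 := ((Real.hasDerivAt_log hpos.ne').comp x h2).div_const (Real.log 2)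
  have hx := two_rpow_pos x
  have hlog : Real.log 2 ≠ 0 := by
    have := Real.log_pos (by norm_num : (1:ℝ) < 2); linarith
  have h4 : HasDerivAt Phip ((1 + (2:ℝ)^x)⁻¹ * ((2:ℝ)^x * Real.log 2) / Real.log 2) x := by
    unfold Phip; simpa [Real.logb, Function.comp] using h3
  convert h4 using 1
  unfold dPhip; field_simp; ring

lemma hasDerivAt_dPhip (x : ℝ) : HasDerivAt dPhip (ddPhip x) x := by
  have h1 := hasDerivAt_two_rpow x
  have h2 : HasDerivAt (fun y : ℝ => (2:ℝ) ^ y + 1) ((2:ℝ) ^ x * Real.log 2) x :=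
    h1.add_const 1
  have hx := two_rpow_pos x
  have hne : (2:ℝ) ^ x + 1 ≠ 0 := by linarith
  have h3 := h1.div h2 hne
  refine h3.congr_deriv ?_
  unfold ddPhip
  field_simp
  ring

lemma dPhip_mono : Monotone dPhip := by
  intro a b hab
  have h : (2:ℝ) ^ a ≤ (2:ℝ) ^ b :=
    Real.rpow_le_rpow_of_exponent_le (by norm_num) hab
  have ha := two_rpow_pos a; have hb := two_rpow_pos b
  unfold dPhip
  rw [div_le_div_iff₀ (by linarith) (by linarith)]
  nlinarith

lemma ddPhip_mono {a b : ℝ} (hab : a ≤ b) (hb : b ≤ 0) : ddPhip a ≤ ddPhip b := by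
  have h : (2:ℝ) ^ a ≤ (2:ℝ) ^ b :=
    Real.rpow_le_rpow_of_exponent_le (by norm_num) hab
  have hb1 : (2:ℝ) ^ b ≤ 1 := Real.rpow_le_one_of_one_le_of_nonpos (by norm_num) hb
  have ha := two_rpow_pos a; have hbp := two_rpow_pos b
  have hlog : 0 ≤ Real.log 2 := Real.log_nonneg (by norm_num)
  unfold ddPhip
  rw [div_le_div_iff₀ (by positivity) (by positivity)]
  have key : (2:ℝ)^a * ((2:ℝ)^b + 1)^2 ≤ (2:ℝ)^b * ((2:ℝ)^a + 1)^2 := by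
    nlinarith [mul_nonneg (sub_nonneg.2 h) (sub_nonneg.2 (by nlinarith : (2:ℝ)^a * (2:ℝ)^b ≤ 1))]
  nlinarith

/-- tangent line of Phip at x lies below graph -/
lemma tangent_le (x y : ℝ) : Phip x + (y - x) * dPhip x ≤ Phip y := by
  rcases lt_trichotomy x y with hxy | hxy | hxy
  · obtain ⟨c, hc, hc'⟩ := exists_hasDerivAt_eq_slope Phip dPhip hxy
      (fun t _ => (hasDerivAt_Phip t).continuousAt.continuousWithinAt)
      (fun t _ => hasDerivAt_Phip t)
    have hm : dPhip x ≤ dPhip c := dPhip_mono hc.1.le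
    rw [eq_div_iff (by intro h; nlinarith : y - x ≠ 0)] at hc'
    nlinarith
  · simp [hxy]
  · obtain ⟨c, hc, hc'⟩ := exists_hasDerivAt_eq_slope Phip dPhip hxy
      (fun t _ => (hasDerivAt_Phip t).continuousAt.continuousWithinAt)
      (fun t _ => hasDerivAt_Phip t)
    have hm : dPhip c ≤ dPhip x := dPhip_mono hc.2.le
    rw [eq_div_iff (by intro h; nlinarith : x - y ≠ 0)] at hc'
    nlinarith

lemma Ep_nonneg (i r : ℝ) : 0 ≤ Ep i r := by
  have := tangent_le i (i - r)
  unfold Ep; nlinarith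

theorem stmt_0 (Δ : ℝ) (hΔ : 0 < Δ) :
    ∀ i : ℝ, i ≤ 0 → ∀ r : ℝ, 0 ≤ r → r < Δ →
      0 ≤ Ep i r ∧ Ep i r ≤ Ep 0 Δ ∧
      |Phip (i - r) - (Phip i - r * dPhip i)| ≤
        Phip (-Δ) - Phip 0 + Δ * dPhip 0 := by
  intro i hi r hr hrΔ
  have h1 : 0 ≤ Ep i r := Ep_nonneg i r
  -- step A : Ep 0 r ≤ Ep 0 Δ
  have hA : Ep 0 r ≤ Ep 0 Δ := by
    have hlt : -Δ < -r := by linarith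
    obtain ⟨c, hc, hc'⟩ := exists_hasDerivAt_eq_slope Phip dPhip hlt
      (fun t _ => (hasDerivAt_Phip t).continuousAt.continuousWithinAt)
      (fun t _ => hasDerivAt_Phip t)
    have hm : dPhip c ≤ dPhip 0 := dPhip_mono (by linarith [hc.2] : c ≤ 0)
    rw [eq_div_iff (by intro h; nlinarith : -r - -Δ ≠ 0)] at hc'
    have hd : 0 ≤ Δ - r := by linarith
    unfold Ep
    simp only [zero_sub]
    nlinarith
  -- step B : Ep i r ≤ Ep 0 r
  have hB : Ep i r ≤ Ep 0 r := by
    rcases eq_or_lt_of_le hi with hi0 | hi0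
    · rw [hi0]
    · -- MVT on g t = Phip (t - r) - Phip t + r * dPhip t over [i, 0]
      set g : ℝ → ℝ := fun t => Phip (t - r) - Phip t + r * dPhip t with hg
      set g' : ℝ → ℝ := fun t => dPhip (t - r) - dPhip t + r * ddPhip t with hg'
      have hder : ∀ t : ℝ, HasDerivAt g (g' t) t := by
        intro t
        have hshift : HasDerivAt (fun t : ℝ => Phip (t - r)) (dPhip (t - r)) t := by
          have := (hasDerivAt_Phip (t - r)).comp t ((hasDerivAt_id t).sub_const r)
          exact this.congr_deriv (mul_one _)
        exact (hshift.sub (hasDerivAt_Phip t)).add ((hasDerivAt_dPhip t).const_mul r)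
      obtain ⟨c, hc, hc'⟩ := exists_hasDerivAt_eq_slope g g' hi0
        (fun t _ => (hder t).continuousAt.continuousWithinAt)
        (fun t ht => hder t)
      have hcneg : c < 0 := hc.2
      -- show g' c ≥ 0
      have hgc : 0 ≤ g' c := by
        rcases eq_or_lt_of_le hr with hr0 | hr0
        · simp [hg', ← hr0]
        · have hlt : c - r < c := by linarith
          obtain ⟨d, hd, hd'⟩ := exists_hasDerivAt_eq_slope dPhip ddPhip hlt
            (fun t _ => (hasDerivAt_dPhip t).continuousAt.continuousWithinAt)
            (fun t _ => hasDerivAt_dPhip t)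
          rw [eq_div_iff (by intro h; nlinarith : c - (c - r) ≠ 0)] at hd'
          have hmono : ddPhip d ≤ ddPhip c := ddPhip_mono hd.2.le hcneg.le
          simp only [hg']
          nlinarith
      have hpos : 0 < 0 - i := by linarith
      rw [eq_div_iff (by intro h; nlinarith : (0:ℝ) - i ≠ 0)] at hc'
      have hge : 0 ≤ g 0 - g i := by nlinarith
      unfold Ep
      simp only [hg] at hge
      simp only [zero_sub] at hge ⊢
      linarith
  have h2 : Ep i r ≤ Ep 0 Δ := le_trans hB hA
  refine ⟨h1, h2, ?_⟩
  have habs : Phip (i - r) - (Phip i - r * dPhip i) = Ep i r := by unfold Ep; ring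
  rw [habs, abs_of_nonneg h1]
  have : Ep 0 Δ = Phip (-Δ) - Phip 0 + Δ * dPhip 0 := by
    unfold Ep; norm_num
  linarith
end

section
/- Fix Δ > 0 and a real r with 0 ≤ r < Δ. The map i ↦ E⁺(i, r) is monotone nondecreasing on the set of reals i ≤ 0, and moreover, if r > 0 then E⁺(i, r) > 0 for every i ≤ 0; and for each fixed i ≤ 0 the map r ↦ E⁺(i, r) is monotone nondecreasing on [0, ∞). -/
lemma hasDerivAt_dPhip_s1 (x : ℝ) :
    HasDerivAt dPhip (Real.log 2 * (2:ℝ)^x / ((2:ℝ)^x + 1)^2) x := by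
  have h2 : HasDerivAt (fun x : ℝ => (2:ℝ) ^ x) ((2:ℝ)^x * Real.log 2) x :=
    (Real.hasStrictDerivAt_const_rpow two_pos x).hasDerivAt
  have hne : ((2:ℝ)^x + 1) ≠ 0 := by positivity
  have hdiv : HasDerivAt dPhip
      (((2:ℝ)^x * Real.log 2 * ((2:ℝ)^x + 1) - (2:ℝ)^x * ((2:ℝ)^x * Real.log 2)) / ((2:ℝ)^x + 1)^2) x :=
    h2.div (h2.add_const 1) hne
  convert hdiv using 1
  ring

lemma dPhip_strictMono : StrictMono dPhip := by
  intro a b hab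
  have ha := two_rpow_pos a
  have hb := two_rpow_pos b
  have h : (2:ℝ)^a < (2:ℝ)^b := by
    exact (Real.rpow_lt_rpow_left_iff (by norm_num)).mpr hab
  unfold dPhip
  rw [div_lt_div_iff₀ (by linarith) (by linarith)]
  nlinarith

lemma key_H {s : ℝ} (hs : 0 ≤ s) : 2 * Real.exp s ≤ s * Real.exp s + s + 2 := by
  have hder : ∀ x : ℝ, HasDerivAt (fun s : ℝ => s * Real.exp s + s + 2 - 2 * Real.exp s)
      ((1 * Real.exp x + x * Real.exp x + 1) - 2 * Real.exp x) x := by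
    intro x
    exact ((((hasDerivAt_id x).mul (Real.hasDerivAt_exp x)).add (hasDerivAt_id x)).add_const
      2).sub ((Real.hasDerivAt_exp x).const_mul 2)
  have mono : MonotoneOn (fun s : ℝ => s * Real.exp s + s + 2 - 2 * Real.exp s) (Set.Ici 0) := by
    apply monotoneOn_of_deriv_nonneg (convex_Ici 0)
    · exact fun x _ => (hder x).differentiableAt.continuousAt.continuousWithinAt
    · exact fun x _ => (hder x).differentiableAt.differentiableWithinAt
    · intro x hx
      rw [interior_Ici] at hx
      rw [(hder x).deriv]
      have h1 : -x + 1 ≤ Real.exp (-x) := Real.add_one_le_exp (-x)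
      have h2 : Real.exp (-x) * Real.exp x = 1 := by
        rw [← Real.exp_add]; simp
      nlinarith [Real.exp_pos x]
  have h0 := mono Set.self_mem_Ici (Set.mem_Ici.mpr hs) hs
  simp only [Real.exp_zero] at h0
  linarith

lemma key_F {u s : ℝ} (hu : 0 < u) (hu1 : u ≤ 1) (hs : 0 ≤ s) :
    0 ≤ (1 + u) * (Real.exp (-s) - 1) + s + s * u * Real.exp (-s) := by
  set e := Real.exp (-s) with he_def
  have he : 0 < e := Real.exp_pos _
  have h1 : -s + 1 ≤ e := Real.add_one_le_exp (-s)
  have hmul : e * Real.exp s = 1 := by rw [he_def, ← Real.exp_add]; simp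
  have h2 : e * (s + 1) ≤ 1 := by
    have := Real.add_one_le_exp s
    nlinarith [Real.exp_pos s]
  have h3 : 2 ≤ s + (s + 2) * e := by
    have := key_H hs
    nlinarith [Real.exp_pos s]
  nlinarith [mul_nonneg (by linarith : (0:ℝ) ≤ 1 - u) (by nlinarith : (0:ℝ) ≤ 1 - e * (s + 1))]

lemma deriv_i_nonneg {i r : ℝ} (hi : i ≤ 0) (hr : 0 ≤ r) :
    0 ≤ dPhip (i - r) - dPhip i + r * (Real.log 2 * (2:ℝ)^i / ((2:ℝ)^i + 1)^2) := by
  have hu : 0 < (2:ℝ)^i := two_rpow_pos i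
  have hu1 : (2:ℝ)^i ≤ 1 := Real.rpow_le_one_of_one_le_of_nonpos one_le_two hi
  have hs : 0 ≤ r * Real.log 2 := mul_nonneg hr (Real.log_nonneg one_le_two)
  set u := (2:ℝ)^i with hu_def
  set s := r * Real.log 2 with hs_def
  have hv : (2:ℝ)^(i - r) = u * Real.exp (-s) := by
    rw [hu_def, Real.rpow_def_of_pos two_pos, Real.rpow_def_of_pos two_pos, ← Real.exp_add]
    ring_nf
    rw [hs_def]; ring_nf
  have hF := key_F hu hu1 hs
  set e := Real.exp (-s) with he_def
  have he : 0 < e := Real.exp_pos _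
  unfold dPhip
  rw [hv]
  have hrw : r * (Real.log 2 * u / ((u + 1)^2)) = s * u / (u + 1)^2 := by
    rw [hs_def]; ring
  rw [hrw]
  have hd1 : (0:ℝ) < u * e + 1 := by positivity
  have hd2 : (0:ℝ) < u + 1 := by linarith
  have expand : u * e / (u * e + 1) - u / (u + 1) + s * u / (u + 1)^2 =
      u * ((1 + u) * (e - 1) + s + s * u * e) / ((u * e + 1) * (u + 1)^2) := by
    field_simp
    ring
  rw [expand]
  positivity

lemma hasDerivAt_Ep_i (r i : ℝ) :
    HasDerivAt (fun i => Ep i r)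
      (dPhip (i - r) * 1 - dPhip i + r * (Real.log 2 * (2:ℝ)^i / ((2:ℝ)^i + 1)^2)) i := by
  unfold Ep
  exact (((hasDerivAt_Phip (i - r)).comp i ((hasDerivAt_id i).sub_const r)).sub
    (hasDerivAt_Phip i)).add ((hasDerivAt_dPhip_s1 i).const_mul r)

lemma hasDerivAt_Ep_r (i r : ℝ) :
    HasDerivAt (fun r => Ep i r) (dPhip (i - r) * (0 - 1) - 0 + dPhip i) r := by
  unfold Ep
  exact (((hasDerivAt_Phip (i - r)).comp r ((hasDerivAt_const r i).sub (hasDerivAt_id r))).sub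
    (hasDerivAt_const r (Phip i))).add (hasDerivAt_mul_const (dPhip i))

lemma Ep_strictMonoOn_r (i : ℝ) : StrictMonoOn (fun r => Ep i r) (Set.Ici 0) := by
  apply strictMonoOn_of_deriv_pos (convex_Ici 0)
  · exact fun x _ => (hasDerivAt_Ep_r i x).differentiableAt.continuousAt.continuousWithinAt
  · intro x hx
    rw [interior_Ici] at hx
    rw [(hasDerivAt_Ep_r i x).deriv]
    have : dPhip (i - x) < dPhip i := dPhip_strictMono (by linarith [Set.mem_Ioi.mp hx])
    linarith

theorem stmt_1 (Δ : ℝ) (hΔ : 0 < Δ) (r : ℝ) (hr0 : 0 ≤ r) (hrΔ : r < Δ) :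
    (∀ i₁ i₂ : ℝ, i₁ ≤ i₂ → i₂ ≤ 0 → Ep i₁ r ≤ Ep i₂ r) ∧
    (0 < r → ∀ i : ℝ, i ≤ 0 → 0 < Ep i r) ∧
    (∀ i : ℝ, i ≤ 0 → ∀ r₁ r₂ : ℝ, 0 ≤ r₁ → r₁ ≤ r₂ → Ep i r₁ ≤ Ep i r₂) := by
  refine ⟨?_, ?_, ?_⟩
  · intro i₁ i₂ h12 h20
    have mono : MonotoneOn (fun i => Ep i r) (Set.Iic 0) := by
      apply monotoneOn_of_deriv_nonneg (convex_Iic 0)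
      · exact fun x _ => (hasDerivAt_Ep_i r x).differentiableAt.continuousAt.continuousWithinAt
      · exact fun x _ => (hasDerivAt_Ep_i r x).differentiableAt.differentiableWithinAt
      · intro x hx
        rw [interior_Iic] at hx
        rw [(hasDerivAt_Ep_i r x).deriv]
        have := deriv_i_nonneg (le_of_lt (Set.mem_Iio.mp hx)) hr0
        linarith [this]
    exact mono (Set.mem_Iic.mpr (h12.trans h20)) (Set.mem_Iic.mpr h20) h12
  · intro hrpos i _
    have h0 : Ep i 0 = 0 := by unfold Ep; simp
    have := Ep_strictMonoOn_r i Set.self_mem_Ici (Set.mem_Ici.mpr hr0) hrpos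
    simpa [h0] using this
  · intro i _ r₁ r₂ h1 h12
    exact (Ep_strictMonoOn_r i).monotoneOn (Set.mem_Ici.mpr h1)
      (Set.mem_Ici.mpr (h1.trans h12)) h12
end

section
/- Let Δ > 0 and fix a real r with 0 ≤ r < Δ. Then, as i → −∞, both error ratios Q⁺(i, r) and Q⁻(i, r) tend to the same limit (2^{−r} + r·ln 2 − 1)/(2^{−Δ} + Δ·ln 2 − 1); that is, Tendsto (fun i => Q⁺(i, r)) atBot and Tendsto (fun i => Q⁻(i, r)) atBot both converge to (2^{−r} + r·ln 2 − 1)/(2^{−Δ} + Δ·ln 2 − 1). -/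
open Filter

/-- Error ratio Q⁺(i, r) = E⁺(i, r)/E⁺(i, Δ) -/
noncomputable def Qp (Δ i r : ℝ) : ℝ := Ep i r / Ep i Δ

/-- Φ⁻(x) = log₂(1 − 2^x) -/
noncomputable def Phim (x : ℝ) : ℝ := Real.logb 2 (1 - (2:ℝ) ^ x)

/-- (Φ⁻)'(x) = −2^x / (1 − 2^x) -/
noncomputable def dPhim (x : ℝ) : ℝ := -(2:ℝ) ^ x / (1 - (2:ℝ) ^ x)

/-- First-order Taylor remainder E⁻(i, r) -/
noncomputable def Em (i r : ℝ) : ℝ := Phim (i - r) - Phim i + r * dPhim i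

/-- Error ratio Q⁻(i, r) = E⁻(i, r)/E⁻(i, Δ) -/
noncomputable def Qm (Δ i r : ℝ) : ℝ := Em i r / Em i Δ

/-- E⁺ with the substitution t = 2^i. -/
noncomputable def Fp (r t : ℝ) : ℝ :=
  (Real.log (1 + (2:ℝ)^(-r)*t) - Real.log (1+t))/Real.log 2 + r * (t/(t+1))

/-- E⁻ with the substitution t = 2^i. -/
noncomputable def Fm (r t : ℝ) : ℝ :=
  (Real.log (1 - (2:ℝ)^(-r)*t) - Real.log (1-t))/Real.log 2 + r * (-t/(1-t))

lemma Ep_eq (i r : ℝ) : Ep i r = Fp r ((2:ℝ)^i) := by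
  have h : (2:ℝ)^(-r) * (2:ℝ)^i = (2:ℝ)^(i-r) := by
    rw [← Real.rpow_add (by norm_num)]; ring_nf
  simp [Ep, Fp, Phip, dPhip, Real.logb, h, sub_div]

lemma Em_eq (i r : ℝ) : Em i r = Fm r ((2:ℝ)^i) := by
  have h : (2:ℝ)^(-r) * (2:ℝ)^i = (2:ℝ)^(i-r) := by
    rw [← Real.rpow_add (by norm_num)]; ring_nf
  simp [Em, Fm, Phim, dPhim, Real.logb, h, sub_div, neg_div]

lemma cancel (a b t : ℝ) (ht : t ≠ 0) : a / b = (a/t)/(b/t) := by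
  rcases eq_or_ne b 0 with hb | hb
  · simp [hb]
  · field_simp

lemma hFp (r : ℝ) : HasDerivAt (Fp r)
    (((2:ℝ)^(-r) + r*Real.log 2 - 1)/Real.log 2) 0 := by
  have hl2 : Real.log 2 ≠ 0 := ne_of_gt (Real.log_pos (by norm_num))
  have h1 : HasDerivAt (fun t : ℝ => 1 + (2:ℝ)^(-r)*t) ((2:ℝ)^(-r)) 0 := by
    simpa using ((hasDerivAt_id (0:ℝ)).const_mul ((2:ℝ)^(-r))).const_add 1
  have h1' := h1.log (by norm_num)
  have h2 : HasDerivAt (fun t : ℝ => 1 + t) 1 (0:ℝ) := by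
    simpa using (hasDerivAt_id (0:ℝ)).const_add 1
  have h2' := h2.log (by norm_num)
  have h3 : HasDerivAt (fun t : ℝ => t/(t+1)) 1 0 := by
    have := (hasDerivAt_id (0:ℝ)).div ((hasDerivAt_id (0:ℝ)).add_const 1) (by norm_num)
    simpa [Pi.div_def, Pi.neg_def] using this
  have := ((h1'.sub h2').div_const (Real.log 2)).add (h3.const_mul r)
  refine this.congr_deriv ?_
  field_simp
  ring

lemma hFm (r : ℝ) : HasDerivAt (Fm r)
    (-(((2:ℝ)^(-r) + r*Real.log 2 - 1)/Real.log 2)) 0 := by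
  have hl2 : Real.log 2 ≠ 0 := ne_of_gt (Real.log_pos (by norm_num))
  have h1 : HasDerivAt (fun t : ℝ => 1 - (2:ℝ)^(-r)*t) (-(2:ℝ)^(-r)) 0 := by
    simpa using ((hasDerivAt_id (0:ℝ)).const_mul ((2:ℝ)^(-r))).const_sub 1
  have h1' := h1.log (by norm_num)
  have h2 : HasDerivAt (fun t : ℝ => 1 - t) (-1) (0:ℝ) := by
    simpa using (hasDerivAt_id (0:ℝ)).const_sub 1
  have h2' := h2.log (by norm_num)
  have h3 : HasDerivAt (fun t : ℝ => -t/(1-t)) (-1) 0 := by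
    have := (hasDerivAt_id (0:ℝ)).neg.div ((hasDerivAt_id (0:ℝ)).const_sub 1) (by norm_num)
    simpa [Pi.div_def, Pi.neg_def] using this
  have := ((h1'.sub h2').div_const (Real.log 2)).add (h3.const_mul r)
  refine this.congr_deriv ?_
  field_simp
  ring

lemma ht2 : Tendsto (fun i : ℝ => (2:ℝ)^i) atBot (nhdsWithin 0 {(0:ℝ)}ᶜ) := by
  refine tendsto_nhdsWithin_of_tendsto_nhds_of_eventually_within _
    (tendsto_rpow_atBot_of_base_gt_one 2 one_lt_two)
    (Eventually.of_forall fun i => ?_)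
  simpa using (Real.rpow_pos_of_pos two_pos i).ne'

lemma slope_Fp (s t : ℝ) : slope (Fp s) 0 t = Fp s t / t := by
  rw [slope_def_field]; simp [Fp]

lemma slope_Fm (s t : ℝ) : slope (Fm s) 0 t = Fm s t / t := by
  rw [slope_def_field]; simp [Fm]

lemma hc_pos (Δ : ℝ) (hΔ : 0 < Δ) : 0 < (2:ℝ)^(-Δ) + Δ * Real.log 2 - 1 := by
  have hl2 : 0 < Real.log 2 := Real.log_pos (by norm_num)
  have hne : -(Δ * Real.log 2) ≠ 0 := by nlinarith
  have h := Real.add_one_lt_exp hne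
  have e : (2:ℝ)^(-Δ) = Real.exp (-(Δ * Real.log 2)) := by
    rw [Real.rpow_def_of_pos (by norm_num)]; ring_nf
  linarith [e ▸ h]

theorem stmt_5 (Δ : ℝ) (hΔ : 0 < Δ) (r : ℝ) (hr0 : 0 ≤ r) (hrΔ : r < Δ) :
    Tendsto (fun i => Qp Δ i r) atBot
      (nhds (((2:ℝ) ^ (-r) + r * Real.log 2 - 1) /
             ((2:ℝ) ^ (-Δ) + Δ * Real.log 2 - 1))) ∧
    Tendsto (fun i => Qm Δ i r) atBot
      (nhds (((2:ℝ) ^ (-r) + r * Real.log 2 - 1) /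
             ((2:ℝ) ^ (-Δ) + Δ * Real.log 2 - 1))) := by
  have hl2 : 0 < Real.log 2 := Real.log_pos (by norm_num)
  set cr : ℝ := (2:ℝ)^(-r) + r * Real.log 2 - 1 with hcr
  set cΔ : ℝ := (2:ℝ)^(-Δ) + Δ * Real.log 2 - 1 with hcΔ
  have hcΔ0 : 0 < cΔ := hc_pos Δ hΔ
  have hne : cΔ / Real.log 2 ≠ 0 := by positivity
  have hnem : -(cΔ / Real.log 2) ≠ 0 := by simpa using hne
  have hpos : ∀ i : ℝ, (2:ℝ)^i ≠ 0 := fun i => (Real.rpow_pos_of_pos two_pos i).ne'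
  have slp : ∀ s : ℝ, Tendsto (fun i : ℝ => slope (Fp s) 0 ((2:ℝ)^i)) atBot
      (nhds (((2:ℝ)^(-s) + s*Real.log 2 - 1)/Real.log 2)) :=
    fun s => ((hasDerivAt_iff_tendsto_slope.mp (hFp s)).comp ht2)
  have slm : ∀ s : ℝ, Tendsto (fun i : ℝ => slope (Fm s) 0 ((2:ℝ)^i)) atBot
      (nhds (-(((2:ℝ)^(-s) + s*Real.log 2 - 1)/Real.log 2))) :=
    fun s => ((hasDerivAt_iff_tendsto_slope.mp (hFm s)).comp ht2)
  constructor
  · rw [cancel cr cΔ (Real.log 2) hl2.ne']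
    refine ((slp r).div (slp Δ) hne).congr fun i => ?_
    rw [Pi.div_apply, slope_Fp, slope_Fp, Qp, Ep_eq, Ep_eq]
    exact (cancel _ _ _ (hpos i)).symm
  · rw [cancel cr cΔ (Real.log 2) hl2.ne', show cr / Real.log 2 / (cΔ / Real.log 2)
        = -(cr / Real.log 2) / -(cΔ / Real.log 2) from (neg_div_neg_eq _ _).symm]
    refine ((slm r).div (slm Δ) hnem).congr fun i => ?_
    rw [Pi.div_apply, slope_Fm, slope_Fm, Qm, Em_eq, Em_eq]
    exact (cancel _ _ _ (hpos i)).symm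
end

section
/- For all real numbers A > 0 and B ≥ 1, the quantity K(A, B) = A²·ln(A + B) − A²·ln(A + 1) − A·B + A + B·ln B + B·ln(A + 1) − B·ln(A + B) satisfies K(A, B) ≤ 0. -/
open Real Set

theorem stmt_7 (A B : ℝ) (hA : 0 < A) (hB : 1 ≤ B) :
    A ^ 2 * Real.log (A + B) - A ^ 2 * Real.log (A + 1) - A * B + A
      + B * Real.log B + B * Real.log (A + 1) - B * Real.log (A + B) ≤ 0 := by
  set F : ℝ → ℝ := fun b => A ^ 2 * Real.log (A + b) - A ^ 2 * Real.log (A + 1) - A * b + A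
      + b * Real.log b + b * Real.log (A + 1) - b * Real.log (A + b) with hFdef
  set g : ℝ → ℝ := fun b => A ^ 2 / (A + b) - A + Real.log b + 1 + Real.log (A + 1)
      - Real.log (A + b) - b / (A + b) with hgdef
  have hAb : ∀ b : ℝ, 0 < b → 0 < A + b := fun b hb => by linarith
  have hA1 : (0:ℝ) < A + 1 := by linarith
  -- derivative of F
  have hFd : ∀ b : ℝ, 0 < b → HasDerivAt F (g b) b := by
    intro b hb
    have h1 : HasDerivAt (fun x : ℝ => A + x) 1 b := (hasDerivAt_id b).const_add A
    have hlog : HasDerivAt (fun x : ℝ => Real.log (A + x)) (1 / (A + b)) b := by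
      simpa using h1.log (hAb b hb).ne'
    have hlogb : HasDerivAt Real.log (1 / b) b := by
      simpa [one_div] using Real.hasDerivAt_log hb.ne'
    have h := ((((((hlog.const_mul (A ^ 2)).sub_const (A ^ 2 * Real.log (A + 1))).sub
        ((hasDerivAt_id b).const_mul A)).add_const A).add
        ((hasDerivAt_id b).mul hlogb)).add
        ((hasDerivAt_id b).mul_const (Real.log (A + 1)))).sub
        ((hasDerivAt_id b).mul hlog)
    refine h.congr_deriv ?_
    simp only [hgdef, id]
    field_simp
    ring
  -- derivative of g
  have hgd : ∀ b : ℝ, 0 < b →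
      HasDerivAt g (-(A ^ 2) / (A + b) ^ 2 + 1 / b - 1 / (A + b) - A / (A + b) ^ 2) b := by
    intro b hb
    have hne : (A + b) ≠ 0 := (hAb b hb).ne'
    have h1 : HasDerivAt (fun x : ℝ => A + x) 1 b := (hasDerivAt_id b).const_add A
    have hlog : HasDerivAt (fun x : ℝ => Real.log (A + x)) (1 / (A + b)) b := by
      simpa using h1.log hne
    have hlogb : HasDerivAt Real.log (1 / b) b := by
      simpa [one_div] using Real.hasDerivAt_log hb.ne'
    have hq : HasDerivAt (fun x : ℝ => A ^ 2 / (A + x))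
        ((0 * (A + b) - A ^ 2 * 1) / (A + b) ^ 2) b :=
      (hasDerivAt_const b (A ^ 2)).div h1 hne
    have hr : HasDerivAt (fun x : ℝ => x / (A + x))
        ((1 * (A + b) - b * 1) / (A + b) ^ 2) b :=
      (hasDerivAt_id b).div h1 hne
    have h := (((((hq.sub_const A).add hlogb).add_const 1).add_const
        (Real.log (A + 1))).sub hlog).sub hr
    refine h.congr_deriv ?_
    ring
  -- g is antitone on [1, ∞)
  have hganti : AntitoneOn g (Ici 1) := by
    apply antitoneOn_of_deriv_nonpos (convex_Ici 1)
    · exact fun x hx => ((hgd x (by simp at hx; linarith)).continuousAt.continuousWithinAt)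
    · intro x hx
      rw [interior_Ici] at hx
      exact (hgd x (by linarith [mem_Ioi.mp hx])).differentiableAt.differentiableWithinAt
    · intro x hx
      rw [interior_Ici] at hx
      have hx1 : (1:ℝ) < x := mem_Ioi.mp hx
      have hx0 : (0:ℝ) < x := by linarith
      rw [(hgd x hx0).deriv]
      have hAx : 0 < A + x := hAb x hx0
      have heq : -(A ^ 2) / (A + x) ^ 2 + 1 / x - 1 / (A + x) - A / (A + x) ^ 2
          = A * A * (1 - x) / (x * (A + x) ^ 2) := by
        field_simp
        ring
      rw [heq]
      apply div_nonpos_of_nonpos_of_nonneg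
      · nlinarith
      · positivity
  -- g 1 = 0
  have hg1 : g 1 = 0 := by
    simp only [hgdef, Real.log_one]
    field_simp
    ring
  -- g ≤ 0 on [1, ∞)
  have hgle : ∀ x : ℝ, 1 ≤ x → g x ≤ 0 := by
    intro x hx
    have := hganti (self_mem_Ici) (mem_Ici.mpr hx) hx
    linarith [hg1 ▸ this]
  -- F is antitone on [1, ∞)
  have hFanti : AntitoneOn F (Ici 1) := by
    apply antitoneOn_of_deriv_nonpos (convex_Ici 1)
    · exact fun x hx => ((hFd x (by simp at hx; linarith)).continuousAt.continuousWithinAt)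
    · intro x hx
      rw [interior_Ici] at hx
      exact (hFd x (by linarith [mem_Ioi.mp hx])).differentiableAt.differentiableWithinAt
    · intro x hx
      rw [interior_Ici] at hx
      have hx1 : (1:ℝ) < x := mem_Ioi.mp hx
      rw [(hFd x (by linarith)).deriv]
      exact hgle x hx1.le
  -- F 1 = 0
  have hF1 : F 1 = 0 := by
    simp only [hFdef, Real.log_one]
    ring
  have := hFanti (self_mem_Ici) (mem_Ici.mpr hB) hB
  rw [hF1] at this
  exact this
end

section
/- Let ε ≥ 0, Δ > 0, 0 < Δ_P ≤ Δ. Let i ≤ 0, c ≤ 0, 0 ≤ r̂ ≤ r < Δ with r − r̂ ≤ Δ_P. Let a, b, e, p, m, q be reals with |a − Φ⁺(i)| ≤ ε, |b − (Φ⁺)'(i)| ≤ ε, |e − E⁺(i, Δ)| ≤ ε, |p − Q⁺(c, r̂)| ≤ ε, |p| ≤ 1, |m − r·b| ≤ ε, |q − e·p| ≤ ε. Then the error-correction approximation a − m + q of Φ⁺(i − r) satisfies |Φ⁺(i − r) − (a − m + q)| ≤ (4 + Δ)·ε + E⁺(0, Δ)·(Q_R + Q_I + ε), where Q_R = Q⁺_sup(r*)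 − Q⁺_min(r*) with Q⁺_sup(r) = (2^{−r} + r·ln 2 − 1)/(2^{−Δ} + Δ·ln 2 − 1), Q⁺_min(r) = Q⁺(0, r), r* = log₂( −X·(2·ln(X+1) − ln X − 2·ln 2) / (2X·(ln(X+1) − ln X − ln 2) + X − 1) ) with X = 2^Δ, and Q_I = 1 − Q⁺(0, Δ − Δ_P). -/
/-- Q⁺_sup(r) = (2^{−r} + r·ln 2 − 1)/(2^{−Δ} + Δ·ln 2 − 1) -/
noncomputable def QpSup (Δ r : ℝ) : ℝ :=
  ((2:ℝ) ^ (-r) + r * Real.log 2 - 1) / ((2:ℝ) ^ (-Δ) + Δ * Real.log 2 - 1)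

/-- Q⁺_min(r) = Q⁺(0, r) -/
noncomputable def QpMin (Δ r : ℝ) : ℝ := Qp Δ 0 r

/-- r* for the addition case, with X = 2^Δ -/
noncomputable def rStarP (Δ : ℝ) : ℝ :=
  Real.logb 2
    (-(2:ℝ) ^ Δ * (2 * Real.log ((2:ℝ) ^ Δ + 1) - Real.log ((2:ℝ) ^ Δ) - 2 * Real.log 2) /
      (2 * (2:ℝ) ^ Δ * (Real.log ((2:ℝ) ^ Δ + 1) - Real.log ((2:ℝ) ^ Δ) - Real.log 2)
        + (2:ℝ) ^ Δ - 1))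

namespace LNSAux

open Real Set Filter

noncomputable def W (s : ℝ) : ℝ := (2:ℝ) ^ (-s)
noncomputable def Nf (t s : ℝ) : ℝ :=
  Real.log (1 + t * W s) - Real.log (1 + t) + Real.log 2 * s * (t / (1 + t))
noncomputable def Nds (t s : ℝ) : ℝ :=
  Real.log 2 * (t / (1 + t)) - Real.log 2 * (t * W s / (1 + t * W s))
noncomputable def Ndt (t s : ℝ) : ℝ :=
  W s / (1 + t * W s) - 1 / (1 + t) + Real.log 2 * s / (1 + t) ^ 2
noncomputable def Ndts (t s : ℝ) : ℝ :=
  Real.log 2 / (1 + t) ^ 2 - Real.log 2 * W s / (1 + t * W s) ^ 2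
noncomputable def Tau (t s : ℝ) : ℝ :=
  (1 - t ^ 2 * W s) / (t * (1 + t) * (1 + t * W s))
lemma W_pos (s : ℝ) : 0 < W s := Real.rpow_pos_of_pos (by norm_num) _
lemma one_add_tW_pos {t s : ℝ} (ht : 0 < t) : 0 < 1 + t * W s := by
  have := W_pos s; nlinarith

lemma W_anti : StrictAnti W := fun s₁ s₂ h => by
  have : (-s₂ : ℝ) < -s₁ := by linarith
  exact Real.rpow_lt_rpow_left_iff (by norm_num) |>.mpr this

lemma hasDerivAt_W (s : ℝ) : HasDerivAt W (-(Real.log 2 * W s)) s := by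
  have h1 := (Real.hasStrictDerivAt_const_rpow (by norm_num : (0:ℝ) < 2) (-s)).hasDerivAt
  have h2 : HasDerivAt (fun x : ℝ => -x) (-1) s := hasDerivAt_neg s
  have := h1.comp s h2
  refine this.congr_deriv ?_
  simp [W]; ring

lemma hasDerivAt_Nf_s (t : ℝ) (ht : 0 < t) (s : ℝ) :
    HasDerivAt (fun s => Nf t s) (Nds t s) s := by
  have hW := W_pos s
  have hden : 0 < 1 + t * W s := one_add_tW_pos ht
  have h1 : HasDerivAt (fun s => 1 + t * W s) (t * -(Real.log 2 * W s)) s :=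
    ((hasDerivAt_W s).const_mul t).const_add 1
  have h2 : HasDerivAt (fun s => Real.log (1 + t * W s))
      ((t * -(Real.log 2 * W s)) / (1 + t * W s)) s := h1.log (ne_of_gt hden)
  have h3 : HasDerivAt (fun s : ℝ => Real.log 2 * s * (t / (1 + t)))
      (Real.log 2 * (t / (1 + t))) s := by
    have := (hasDerivAt_id s).const_mul (Real.log 2) |>.mul_const (t / (1 + t))
    refine this.congr_deriv ?_; ring
  have := (h2.sub_const (Real.log (1 + t))).add h3
  refine this.congr_deriv ?_
  unfold Nds; field_simp; ring

lemma hasDerivAt_Ndt_s (t : ℝ) (ht : 0 < t) (s : ℝ) :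
    HasDerivAt (fun s => Ndt t s) (Ndts t s) s := by
  have hden : 0 < 1 + t * W s := one_add_tW_pos ht
  have hden' : 0 < 1 + t := by linarith
  have h1 : HasDerivAt (fun s => 1 + t * W s) (t * -(Real.log 2 * W s)) s :=
    ((hasDerivAt_W s).const_mul t).const_add 1
  have h2 : HasDerivAt (fun s => W s / (1 + t * W s))
      ((-(Real.log 2 * W s) * (1 + t * W s) - W s * (t * -(Real.log 2 * W s)))
        / (1 + t * W s) ^ 2) s := (hasDerivAt_W s).div h1 (ne_of_gt hden)
  have h3 : HasDerivAt (fun s : ℝ => Real.log 2 * s / (1 + t) ^ 2)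
      (Real.log 2 / (1 + t) ^ 2) s := by
    have := ((hasDerivAt_id s).const_mul (Real.log 2)).div_const ((1 + t) ^ 2)
    refine this.congr_deriv ?_; ring
  have := (h2.sub_const (1 / (1 + t))).add h3
  refine this.congr_deriv ?_
  unfold Ndts; field_simp; ring

lemma hasDerivAt_Nf_t (s t : ℝ) (ht : 0 < 1 + t * W s) (ht' : 0 < 1 + t) :
    HasDerivAt (fun t => Nf t s) (Ndt t s) t := by
  have h1 : HasDerivAt (fun t : ℝ => 1 + t * W s) (W s) t := by
    have := (hasDerivAt_id t).mul_const (W s) |>.const_add 1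
    refine this.congr_deriv ?_; ring
  have h2 : HasDerivAt (fun t : ℝ => Real.log (1 + t * W s)) (W s / (1 + t * W s)) t :=
    h1.log (ne_of_gt ht)
  have h3 : HasDerivAt (fun t : ℝ => 1 + t) 1 t := (hasDerivAt_id t).const_add 1
  have h4 : HasDerivAt (fun t : ℝ => Real.log (1 + t)) (1 / (1 + t)) t :=
    h3.log (ne_of_gt ht')
  have h5 : HasDerivAt (fun t : ℝ => Real.log 2 * s * (t / (1 + t)))
      (Real.log 2 * s / (1 + t) ^ 2) t := by
    have := ((hasDerivAt_id t).div h3 (ne_of_gt ht')).const_mul (Real.log 2 * s)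
    refine this.congr_deriv ?_
    field_simp
    simp only [id]; ring
  have := (h2.sub h4).add h5
  exact this.congr_deriv rfl

lemma Nds_pos {t s : ℝ} (ht : 0 < t) (hs : 0 < s) : 0 < Nds t s := by
  have hW := W_pos s
  have hW1 : W s < 1 := by
    have : W s < W 0 := W_anti hs
    simpa [W] using this
  have hL : 0 < Real.log 2 := Real.log_pos (by norm_num)
  have hden : 0 < 1 + t * W s := one_add_tW_pos ht
  have hden' : 0 < 1 + t := by linarith
  have key : t * W s / (1 + t * W s) < t / (1 + t) := by
    rw [div_lt_div_iff₀ hden hden']; nlinarith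
  unfold Nds; nlinarith

lemma Nds_nonneg {t s : ℝ} (ht : 0 < t) (hs : 0 ≤ s) : 0 ≤ Nds t s := by
  rcases eq_or_lt_of_le hs with h | h
  · simp [← h, Nds, W]
  · exact (Nds_pos ht h).le

lemma Ndts_eq (t s : ℝ) (ht : 0 < t) : Ndts t s = Tau t s * Nds t s := by
  have hW := W_pos s
  have hden : 0 < 1 + t * W s := one_add_tW_pos ht
  have hden' : 0 < 1 + t := by linarith
  unfold Ndts Tau Nds
  field_simp
  ring

lemma Tau_mono {t s₁ s₂ : ℝ} (ht : 0 < t) (h : s₁ ≤ s₂) : Tau t s₁ ≤ Tau t s₂ := by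
  have hW1 := W_pos s₁
  have hW2 := W_pos s₂
  have hW : W s₂ ≤ W s₁ := W_anti.antitone h
  have hd1 : 0 < 1 + t * W s₁ := one_add_tW_pos ht
  have hd2 : 0 < 1 + t * W s₂ := one_add_tW_pos ht
  have hden' : 0 < 1 + t := by linarith
  unfold Tau
  rw [div_le_div_iff₀ (by positivity) (by positivity)]
  nlinarith [mul_nonneg (sq_nonneg (t * (1 + t))) (sub_nonneg.2 hW)]

lemma contNf {t : ℝ} (ht : 0 < t) : Continuous (fun s => Nf t s) :=
  (fun s => (hasDerivAt_Nf_s t ht s).differentiableAt) |> Differentiable.continuous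

lemma contNdt {t : ℝ} (ht : 0 < t) : Continuous (fun s => Ndt t s) :=
  (fun s => (hasDerivAt_Ndt_s t ht s).differentiableAt) |> Differentiable.continuous

lemma Nf_strictMono {t : ℝ} (ht : 0 < t) {s₁ s₂ : ℝ} (h0 : 0 ≤ s₁) (h : s₁ < s₂) :
    Nf t s₁ < Nf t s₂ := by
  have := strictMonoOn_of_deriv_pos (convex_Icc s₁ s₂) ((contNf ht).continuousOn)
    (fun x hx => by
      rw [interior_Icc] at hx
      rw [(hasDerivAt_Nf_s t ht x).deriv]
      exact Nds_pos ht (lt_of_le_of_lt h0 hx.1))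
  exact this (left_mem_Icc.2 h.le) (right_mem_Icc.2 h.le) h

lemma Nf_pos {t s : ℝ} (ht : 0 < t) (hs : 0 < s) : 0 < Nf t s := by
  have := Nf_strictMono ht (le_refl 0) hs
  simpa [Nf, W] using this

lemma Nf_s_mono {t s₁ s₂ : ℝ} (ht : 0 < t) (h0 : 0 ≤ s₁) (h : s₁ ≤ s₂) :
    Nf t s₁ ≤ Nf t s₂ := by
  rcases eq_or_lt_of_le h with h' | h'
  · rw [h']
  · exact (Nf_strictMono ht h0 h').le

lemma Nf_t_zero' (t : ℝ) : Nf t 0 = 0 := by simp [Nf, W]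

lemma Ndt_s_zero' (t : ℝ) : Ndt t 0 = 0 := by simp [Ndt, W]

lemma ratio_mono (t : ℝ) (ht : 0 < t) {s₁ s₂ : ℝ} (h1 : 0 < s₁) (h12 : s₁ ≤ s₂) :
    Ndt t s₁ * Nf t s₂ ≤ Ndt t s₂ * Nf t s₁ := by
  rcases eq_or_lt_of_le h12 with h | h
  · rw [h]
  obtain ⟨c₁, hc₁, heq₁⟩ := exists_ratio_hasDerivAt_eq_ratio_slope
    (fun s => Ndt t s) (fun x => Ndts t x) h1 ((contNdt ht).continuousOn)
    (fun x _ => hasDerivAt_Ndt_s t ht x)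
    (fun s => Nf t s) (fun x => Nds t x) ((contNf ht).continuousOn)
    (fun x _ => hasDerivAt_Nf_s t ht x)
  obtain ⟨c₂, hc₂, heq₂⟩ := exists_ratio_hasDerivAt_eq_ratio_slope
    (fun s => Ndt t s) (fun x => Ndts t x) h ((contNdt ht).continuousOn)
    (fun x _ => hasDerivAt_Ndt_s t ht x)
    (fun s => Nf t s) (fun x => Nds t x) ((contNf ht).continuousOn)
    (fun x _ => hasDerivAt_Nf_s t ht x)
  rw [Nf_t_zero', Ndt_s_zero', sub_zero, sub_zero, Ndts_eq t c₁ ht] at heq₁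
  rw [Ndts_eq t c₂ ht] at heq₂
  have hNds1 : 0 < Nds t c₁ := Nds_pos ht hc₁.1
  have hNds2 : 0 < Nds t c₂ := Nds_pos ht (lt_trans h1 hc₂.1)
  have e1 : Ndt t s₁ = Tau t c₁ * Nf t s₁ :=
    mul_right_cancel₀ (ne_of_gt hNds1)
      (by nlinarith [heq₁] : Ndt t s₁ * Nds t c₁ = Tau t c₁ * Nf t s₁ * Nds t c₁)
  have e2 : Ndt t s₂ - Ndt t s₁ = Tau t c₂ * (Nf t s₂ - Nf t s₁) :=
    mul_right_cancel₀ (ne_of_gt hNds2)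
      (by nlinarith [heq₂] :
        (Ndt t s₂ - Ndt t s₁) * Nds t c₂ = Tau t c₂ * (Nf t s₂ - Nf t s₁) * Nds t c₂)
  have hτ : Tau t c₁ ≤ Tau t c₂ := Tau_mono ht (le_of_lt (lt_trans hc₁.2 hc₂.1))
  have hNf1 : 0 < Nf t s₁ := Nf_pos ht h1
  have hNf12 : Nf t s₁ ≤ Nf t s₂ := Nf_s_mono ht h1.le h12
  nlinarith [mul_nonneg (mul_nonneg hNf1.le (sub_nonneg.2 hNf12)) (sub_nonneg.2 hτ)]

lemma Ndt_nonneg {t s : ℝ} (ht : 0 < t) (ht1 : t ≤ 1) (hs : 0 ≤ s) : 0 ≤ Ndt t s := by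
  rcases eq_or_lt_of_le hs with h | h
  · rw [← h, Ndt_s_zero']
  have := monotoneOn_of_deriv_nonneg (convex_Icc 0 s) ((contNdt ht).continuousOn)
    (fun x hx => ((hasDerivAt_Ndt_s t ht x).differentiableAt).differentiableWithinAt)
    (fun x hx => by
      rw [interior_Icc] at hx
      rw [(hasDerivAt_Ndt_s t ht x).deriv]
      have hW := W_pos x
      have hW1 : W x ≤ 1 := by
        have : W x < W 0 := W_anti hx.1
        simpa [W] using this.le
      have hden : 0 < 1 + t * W x := one_add_tW_pos ht
      have hden' : (0:ℝ) < 1 + t := by linarith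
      have hL : 0 < Real.log 2 := Real.log_pos (by norm_num)
      unfold Ndts
      rw [sub_nonneg, div_le_div_iff₀ (by positivity) (by positivity)]
      nlinarith [mul_nonneg (sub_nonneg.2 hW1) (sub_nonneg.2 (by nlinarith : t^2 * W x ≤ 1)),
        mul_pos hL (mul_pos hden hden)])
  have h0 : (0:ℝ) ∈ Icc 0 s := left_mem_Icc.2 hs
  have h1 : s ∈ Icc (0:ℝ) s := right_mem_Icc.2 hs
  calc (0:ℝ) = Ndt t 0 := (Ndt_s_zero' t).symm
    _ ≤ Ndt t s := this h0 h1 hs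

lemma Nf_t_mono {s : ℝ} (hs : 0 ≤ s) {t₁ t₂ : ℝ} (ht1 : 0 < t₁) (h12 : t₁ ≤ t₂)
    (ht2 : t₂ ≤ 1) : Nf t₁ s ≤ Nf t₂ s := by
  have key : ∀ x ∈ Icc t₁ t₂, HasDerivAt (fun t => Nf t s) (Ndt x s) x := by
    intro x hx
    have hx1 : 0 < x := lt_of_lt_of_le ht1 hx.1
    exact hasDerivAt_Nf_t s x (one_add_tW_pos hx1) (by linarith)
  have := monotoneOn_of_deriv_nonneg (convex_Icc t₁ t₂)
    (fun x hx => ((key x hx).differentiableAt).continuousAt.continuousWithinAt)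
    (fun x hx => by
      rw [interior_Icc] at hx
      exact ((key x (Ioo_subset_Icc_self hx)).differentiableAt).differentiableWithinAt)
    (fun x hx => by
      rw [interior_Icc] at hx
      rw [(key x (Ioo_subset_Icc_self hx)).deriv]
      exact Ndt_nonneg (lt_of_lt_of_le ht1 hx.1.le) (le_of_lt (lt_of_lt_of_le hx.2 ht2)) hs)
  exact this (left_mem_Icc.2 h12) (right_mem_Icc.2 h12) h12

lemma V_antitone {s Δ : ℝ} (hs : 0 ≤ s) (hsΔ : s ≤ Δ) (hΔ : 0 < Δ) {t₁ t₂ : ℝ}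
    (ht1 : 0 < t₁) (ht12 : t₁ ≤ t₂) :
    Nf t₂ s / Nf t₂ Δ ≤ Nf t₁ s / Nf t₁ Δ := by
  rcases eq_or_lt_of_le hs with h | hs'
  · rw [← h, Nf_t_zero', Nf_t_zero', zero_div, zero_div]
  have key : ∀ x ∈ Icc t₁ t₂, HasDerivAt (fun t => Nf t s / Nf t Δ)
      ((Ndt x s * Nf x Δ - Nf x s * Ndt x Δ) / (Nf x Δ) ^ 2) x := by
    intro x hx
    have hx1 : 0 < x := lt_of_lt_of_le ht1 hx.1
    exact (hasDerivAt_Nf_t s x (one_add_tW_pos hx1) (by linarith)).div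
      (hasDerivAt_Nf_t Δ x (one_add_tW_pos hx1) (by linarith))
      (ne_of_gt (Nf_pos hx1 hΔ))
  have := antitoneOn_of_deriv_nonpos (convex_Icc t₁ t₂)
    (fun x hx => ((key x hx).differentiableAt).continuousAt.continuousWithinAt)
    (fun x hx => by
      rw [interior_Icc] at hx
      exact ((key x (Ioo_subset_Icc_self hx)).differentiableAt).differentiableWithinAt)
    (fun x hx => by
      rw [interior_Icc] at hx
      rw [(key x (Ioo_subset_Icc_self hx)).deriv]
      apply div_nonpos_of_nonpos_of_nonneg _ (sq_nonneg _)
      rw [sub_nonpos]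
      have hx1 : 0 < x := lt_of_lt_of_le ht1 hx.1.le
      have := ratio_mono x hx1 hs' hsΔ
      linarith)
  exact this (left_mem_Icc.2 ht12) (right_mem_Icc.2 ht12) ht12

lemma two_rpow_pos (x : ℝ) : 0 < (2:ℝ) ^ x := Real.rpow_pos_of_pos (by norm_num) x

lemma Ep_eq_Nf (i s : ℝ) : Ep i s = Nf ((2:ℝ) ^ i) s / Real.log 2 := by
  have hL : 0 < Real.log 2 := Real.log_pos (by norm_num)
  have h2i := two_rpow_pos i
  have h2is := two_rpow_pos (i - s)
  have hmul : (2:ℝ) ^ i * W s = (2:ℝ) ^ (i - s) := by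
    rw [W, ← Real.rpow_add (by norm_num)]; ring_nf
  unfold Ep Phip dPhip Nf Real.logb
  rw [hmul]
  field_simp
  ring

lemma Qp_eq_Nf (Δ i s : ℝ) : Qp Δ i s = Nf ((2:ℝ) ^ i) s / Nf ((2:ℝ) ^ i) Δ := by
  have hL : Real.log 2 ≠ 0 := ne_of_gt (Real.log_pos (by norm_num))
  rw [Qp, Ep_eq_Nf, Ep_eq_Nf, div_div_div_cancel_right₀]
  exact hL

lemma Ep_pos {i Δ : ℝ} (hΔ : 0 < Δ) : 0 < Ep i Δ := by
  rw [Ep_eq_Nf]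
  exact div_pos (Nf_pos (two_rpow_pos i) hΔ) (Real.log_pos (by norm_num))

lemma rpow_le_one' {i : ℝ} (hi : i ≤ 0) : (2:ℝ) ^ i ≤ 1 :=
  Real.rpow_le_one_of_one_le_of_nonpos (by norm_num) hi

lemma Ep_le_Ep0 {i Δ : ℝ} (hi : i ≤ 0) (hΔ : 0 < Δ) : Ep i Δ ≤ Ep 0 Δ := by
  rw [Ep_eq_Nf, Ep_eq_Nf, Real.rpow_zero]
  have hL : 0 < Real.log 2 := Real.log_pos (by norm_num)
  have key : Nf ((2:ℝ) ^ i) Δ ≤ Nf 1 Δ :=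
    Nf_t_mono hΔ.le (two_rpow_pos i) (rpow_le_one' hi) le_rfl
  gcongr

lemma qpMin_le_qp {Δ i s : ℝ} (hi : i ≤ 0) (hs : 0 ≤ s) (hsΔ : s ≤ Δ) (hΔ : 0 < Δ) :
    QpMin Δ s ≤ Qp Δ i s := by
  rw [QpMin, Qp_eq_Nf, Qp_eq_Nf]
  have h0 : (2:ℝ) ^ (0:ℝ) = 1 := Real.rpow_zero 2
  rw [h0]
  have := V_antitone hs hsΔ hΔ (two_rpow_pos i) (rpow_le_one' hi)
  simpa using this

lemma C_pos {Δ : ℝ} (hΔ : 0 < Δ) : 0 < (2:ℝ) ^ (-Δ) + Δ * Real.log 2 - 1 := by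
  have hL : 0 < Real.log 2 := Real.log_pos (by norm_num)
  have h1 : (2:ℝ) ^ (-Δ) = Real.exp (Real.log 2 * (-Δ)) :=
    Real.rpow_def_of_pos (by norm_num) _
  have h2 : Real.log 2 * (-Δ) + 1 < Real.exp (Real.log 2 * (-Δ)) :=
    Real.add_one_lt_exp (by nlinarith)
  rw [h1]; nlinarith

lemma qpSup_mono {Δ r₁ r₂ : ℝ} (hΔ : 0 < Δ) (h0 : 0 ≤ r₁) (h12 : r₁ ≤ r₂) :
    QpSup Δ r₁ ≤ QpSup Δ r₂ := by
  have hC := C_pos hΔ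
  have hL : 0 < Real.log 2 := Real.log_pos (by norm_num)
  have hnum : (2:ℝ) ^ (-r₁) + r₁ * Real.log 2 - 1 ≤ (2:ℝ) ^ (-r₂) + r₂ * Real.log 2 - 1 := by
    have hW1 : (2:ℝ) ^ (-r₁) ≤ 1 := by
      apply Real.rpow_le_one_of_one_le_of_nonpos (by norm_num); linarith
    have hfac : (2:ℝ) ^ (-r₁) - (2:ℝ) ^ (-r₂) = (2:ℝ) ^ (-r₁) * (1 - (2:ℝ) ^ (-(r₂ - r₁))) := by
      rw [mul_sub, mul_one, ← Real.rpow_add (by norm_num)]; ring_nf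
    have hexp : 1 - Real.log 2 * (r₂ - r₁) ≤ (2:ℝ) ^ (-(r₂ - r₁)) := by
      rw [Real.rpow_def_of_pos (by norm_num)]
      have := Real.add_one_le_exp (Real.log 2 * -(r₂ - r₁))
      linarith
    have hWd : (2:ℝ) ^ (-(r₂ - r₁)) ≤ 1 := by
      apply Real.rpow_le_one_of_one_le_of_nonpos (by norm_num); linarith
    have h1 : (2:ℝ) ^ (-r₁) * (1 - (2:ℝ) ^ (-(r₂ - r₁))) ≤ 1 * (1 - (2:ℝ) ^ (-(r₂ - r₁))) := by
      apply mul_le_mul_of_nonneg_right hW1; linarith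
    nlinarith
  unfold QpSup
  gcongr

lemma Nds_mono_s {t : ℝ} (ht : 0 < t) {s₁ s₂ : ℝ} (h : s₁ ≤ s₂) :
    Nds t s₁ ≤ Nds t s₂ := by
  have hW1 := W_pos s₁
  have hW2 := W_pos s₂
  have hW : W s₂ ≤ W s₁ := W_anti.antitone h
  have hd1 : 0 < 1 + t * W s₁ := one_add_tW_pos ht
  have hd2 : 0 < 1 + t * W s₂ := one_add_tW_pos ht
  have hL : 0 < Real.log 2 := Real.log_pos (by norm_num)
  have key : t * W s₂ / (1 + t * W s₂) ≤ t * W s₁ / (1 + t * W s₁) := by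
    rw [div_le_div_iff₀ hd2 hd1]; nlinarith
  unfold Nds; nlinarith

lemma Qp0_eq (Δ x : ℝ) : Qp Δ 0 x = Nf 1 x / Nf 1 Δ := by
  rw [Qp_eq_Nf, Real.rpow_zero]

lemma qpMin_inc {Δ ΔP rhat r : ℝ} (hΔP : 0 < ΔP) (hΔPΔ : ΔP ≤ Δ) (h0 : 0 ≤ rhat)
    (h1 : rhat ≤ r) (h2 : r ≤ Δ) (h3 : r - rhat ≤ ΔP) :
    QpMin Δ r - QpMin Δ rhat ≤ 1 - Qp Δ 0 (Δ - ΔP) := by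
  have hΔ : 0 < Δ := lt_of_lt_of_le hΔP hΔPΔ
  have hND : 0 < Nf 1 Δ := Nf_pos one_pos hΔ
  set d := r - rhat with hd
  have hd0 : 0 ≤ d := by simp [hd]; linarith
  have step1 : Nf 1 r - Nf 1 rhat ≤ Nf 1 Δ - Nf 1 (Δ - d) := by
    have hder : ∀ x : ℝ, HasDerivAt (fun x => Nf 1 (x + d) - Nf 1 x)
        (Nds 1 (x + d) - Nds 1 x) x := by
      intro x
      have hcomp : HasDerivAt (fun x : ℝ => Nf 1 (x + d)) (Nds 1 (x + d)) x := by
        have := (hasDerivAt_Nf_s 1 one_pos (x + d)).comp x ((hasDerivAt_id x).add_const d)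
        exact this.congr_deriv (mul_one _)
      exact hcomp.sub (hasDerivAt_Nf_s 1 one_pos x)
    have hmono := monotoneOn_of_deriv_nonneg (convex_Icc rhat (Δ - d))
      (fun x hx => ((hder x).differentiableAt).continuousAt.continuousWithinAt)
      (fun x hx => ((hder x).differentiableAt).differentiableWithinAt)
      (fun x hx => by
        rw [(hder x).deriv]
        have : x ≤ x + d := by linarith
        linarith [Nds_mono_s one_pos this])
    have hle : rhat ≤ Δ - d := by simp [hd]; linarith
    have := hmono (left_mem_Icc.2 hle) (right_mem_Icc.2 hle) hle
    simp only [hd] at this ⊢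
    have heq1 : rhat + (r - rhat) = r := by ring
    have heq2 : Δ - (r - rhat) + (r - rhat) = Δ := by ring
    rw [heq1, heq2] at this
    linarith
  have step2 : Nf 1 (Δ - ΔP) ≤ Nf 1 (Δ - d) :=
    Nf_s_mono one_pos (by linarith) (by linarith)
  have key : Nf 1 r - Nf 1 rhat ≤ Nf 1 Δ - Nf 1 (Δ - ΔP) := by linarith
  rw [QpMin, QpMin, Qp0_eq, Qp0_eq, Qp0_eq, div_sub_div_same]
  calc (Nf 1 r - Nf 1 rhat) / Nf 1 Δ ≤ (Nf 1 Δ - Nf 1 (Δ - ΔP)) / Nf 1 Δ := by gcongr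
    _ = 1 - Nf 1 (Δ - ΔP) / Nf 1 Δ := by rw [sub_div, div_self hND.ne']

lemma qI_nonneg {Δ ΔP : ℝ} (hΔ : 0 < Δ) (hΔP : 0 < ΔP) (hΔPΔ : ΔP ≤ Δ) :
    0 ≤ 1 - Qp Δ 0 (Δ - ΔP) := by
  have hND : 0 < Nf 1 Δ := Nf_pos one_pos hΔ
  rw [Qp0_eq, sub_nonneg, div_le_one hND]
  exact Nf_s_mono one_pos (by linarith) (by linarith)

lemma Ndt_t_zero (s : ℝ) : Ndt 0 s = W s - 1 + Real.log 2 * s := by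
  unfold Ndt; norm_num

lemma Nf_zero_t (s : ℝ) : Nf 0 s = 0 := by simp [Nf]

lemma tendsto_V {s Δ : ℝ} (hΔ : 0 < Δ) :
    Tendsto (fun t => Nf t s / Nf t Δ) (nhdsWithin (0:ℝ) (Set.Ioi 0))
      (nhds (Ndt 0 s / Ndt 0 Δ)) := by
  have hden : ∀ u : ℝ, (0:ℝ) < 1 + 0 * W u := by intro u; norm_num
  have slope_tendsto : ∀ u : ℝ, Tendsto (fun t => Nf t u / t) (nhdsWithin (0:ℝ) {(0:ℝ)}ᶜ)
      (nhds (Ndt 0 u)) := by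
    intro u
    have hds : HasDerivAt (fun t => Nf t u) (Ndt 0 u) 0 :=
      hasDerivAt_Nf_t u 0 (hden u) (by norm_num)
    have := hasDerivAt_iff_tendsto_slope.mp hds
    have hsl : slope (fun t => Nf t u) 0 = fun t => Nf t u / t := by
      funext t; simp [slope_def_field, Nf_zero_t]
    rwa [hsl] at this
  have hsub : Set.Ioi (0:ℝ) ⊆ {(0:ℝ)}ᶜ := fun x hx => ne_of_gt hx
  have h1 := (slope_tendsto s).mono_left (nhdsWithin_mono 0 hsub)
  have h2 := (slope_tendsto Δ).mono_left (nhdsWithin_mono 0 hsub)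
  have hNdt0Δ : Ndt 0 Δ ≠ 0 := by
    rw [Ndt_t_zero]
    have := C_pos hΔ
    have hWΔ : W Δ = (2:ℝ) ^ (-Δ) := rfl
    rw [hWΔ]; nlinarith
  have hdiv := h1.div h2 hNdt0Δ
  apply hdiv.congr'
  filter_upwards [self_mem_nhdsWithin] with t ht
  have ht' : t ≠ 0 := ne_of_gt ht
  simp only [Pi.div_apply]
  rw [div_div_div_cancel_right₀]
  exact ht'

lemma qp_le_qpSup {Δ i s : ℝ} (hi : i ≤ 0) (hs : 0 ≤ s) (hsΔ : s ≤ Δ) (hΔ : 0 < Δ) :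
    Qp Δ i s ≤ QpSup Δ s := by
  have hQpSup : QpSup Δ s = Ndt 0 s / Ndt 0 Δ := by
    rw [Ndt_t_zero, Ndt_t_zero]
    unfold QpSup W
    ring_nf
  rw [Qp_eq_Nf, hQpSup]
  set t₀ := (2:ℝ) ^ i with ht₀def
  have ht₀ : 0 < t₀ := two_rpow_pos i
  have ht₀1 : t₀ ≤ 1 := rpow_le_one' hi
  apply ge_of_tendsto (tendsto_V hΔ)
  filter_upwards [Ioc_mem_nhdsGT_of_mem (Set.left_mem_Ico.2 ht₀)] with t htm
  exact V_antitone hs hsΔ hΔ htm.1 htm.2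

lemma W_lt_one {s : ℝ} (hs : 0 < s) : W s < 1 := by
  have : W s < W 0 := W_anti hs
  simpa [W] using this

lemma W_le_one {s : ℝ} (hs : 0 ≤ s) : W s ≤ 1 := by
  rcases eq_or_lt_of_le hs with h | h
  · simp [← h, W]
  · exact (W_lt_one h).le

lemma phi1_pos {u : ℝ} (h0 : 0 < u) (h1 : u < 1) :
    0 < u - 1 + 2 * Real.log 2 - 2 * Real.log (1 + u) := by
  have hder : ∀ x : ℝ, 0 < x → HasDerivAt
      (fun x : ℝ => x - 1 + 2 * Real.log 2 - 2 * Real.log (1 + x)) (1 - 2 / (1 + x)) x := by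
    intro x hx
    have h1x : (0:ℝ) < 1 + x := by linarith
    have hlog : HasDerivAt (fun x : ℝ => Real.log (1 + x)) (1 / (1 + x)) x :=
      ((hasDerivAt_id x).const_add 1).log (ne_of_gt h1x)
    have := (((hasDerivAt_id x).sub_const 1).add_const (2 * Real.log 2)).sub
      (hlog.const_mul 2)
    refine this.congr_deriv ?_
    ring
  have key := strictAntiOn_of_deriv_neg (convex_Icc u 1)
    (fun x hx => ((hder x (lt_of_lt_of_le h0 hx.1)).differentiableAt).continuousAt.continuousWithinAt)
    (fun x hx => by
      rw [interior_Icc] at hx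
      rw [(hder x (lt_trans h0 hx.1)).deriv]
      have h1x : (0:ℝ) < 1 + x := by nlinarith [hx.1, h0]
      have : 1 < 2 / (1 + x) := by
        rw [lt_div_iff₀ h1x]; nlinarith [hx.2]
      linarith)
  have := key (left_mem_Icc.2 h1.le) (right_mem_Icc.2 h1.le) h1
  norm_num at this
  nlinarith [this]

lemma phi2_pos {u : ℝ} (h0 : 0 < u) (h1 : u < 1) :
    0 < 4 * Real.log (1 + u) - 4 * Real.log 2 - Real.log u - u + 1 := by
  have hder : ∀ x : ℝ, 0 < x → HasDerivAt
      (fun x : ℝ => 4 * Real.log (1 + x) - 4 * Real.log 2 - Real.log x - x + 1)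
      (4 / (1 + x) - 1 / x - 1) x := by
    intro x hx
    have h1x : (0:ℝ) < 1 + x := by linarith
    have hlog : HasDerivAt (fun x : ℝ => Real.log (1 + x)) (1 / (1 + x)) x :=
      ((hasDerivAt_id x).const_add 1).log (ne_of_gt h1x)
    have hlogx : HasDerivAt Real.log x⁻¹ x := Real.hasDerivAt_log (ne_of_gt hx)
    have := (((hlog.const_mul 4).sub_const (4 * Real.log 2)).sub hlogx).sub
      (hasDerivAt_id x) |>.add_const 1
    refine this.congr_deriv ?_
    field_simp
  have key := strictAntiOn_of_deriv_neg (convex_Icc u 1)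
    (fun x hx => ((hder x (lt_of_lt_of_le h0 hx.1)).differentiableAt).continuousAt.continuousWithinAt)
    (fun x hx => by
      rw [interior_Icc] at hx
      have hx0 : 0 < x := lt_trans h0 hx.1
      rw [(hder x hx0).deriv]
      have h1x : (0:ℝ) < 1 + x := by linarith
      have hlt : 4 / (1 + x) < 1 / x + 1 := by
        rw [div_add' _ _ _ (ne_of_gt hx0), div_lt_div_iff₀ h1x hx0]
        nlinarith [sq_nonneg (x - 1), hx.2]
      linarith)
  have := key (left_mem_Icc.2 h1.le) (right_mem_Icc.2 h1.le) h1
  norm_num at this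
  nlinarith [this]

set_option maxHeartbeats 1000000 in
lemma qdiff_le {Δ s : ℝ} (hΔ : 0 < Δ) (hs : 0 ≤ s) (hsΔ : s ≤ Δ) :
    QpSup Δ s - QpMin Δ s ≤ QpSup Δ (rStarP Δ) - QpMin Δ (rStarP Δ) := by
  have hL : 0 < Real.log 2 := Real.log_pos (by norm_num)
  have hC : 0 < (2:ℝ) ^ (-Δ) + Δ * Real.log 2 - 1 := C_pos hΔ
  set C := (2:ℝ) ^ (-Δ) + Δ * Real.log 2 - 1 with hCdef
  have hND : 0 < Nf 1 Δ := Nf_pos one_pos hΔ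
  set ND := Nf 1 Δ with hNDdef
  have hWΔeq : W Δ = (2:ℝ) ^ (-Δ) := rfl
  have hu0 : 0 < W Δ := W_pos Δ
  have hu1 : W Δ < 1 := W_lt_one hΔ
  have hNDeq : ND = Real.log (1 + W Δ) - Real.log 2 + Real.log 2 * Δ * (1 / 2) := by
    rw [hNDdef]
    unfold Nf
    norm_num
  -- the function G and its derivative
  have hfun : ∀ r : ℝ, QpSup Δ r - QpMin Δ r = (W r + r * Real.log 2 - 1) / C - Nf 1 r / ND := by
    intro r
    rw [QpMin, Qp0_eq]
    rfl
  -- positivity facts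
  have pos1 : 0 < C - 2 * ND := by
    have := phi1_pos hu0 hu1
    rw [hNDeq, hCdef, ← hWΔeq]
    linarith
  have pos2 : C < 4 * ND := by
    have hlogu : Real.log (W Δ) = (-Δ) * Real.log 2 := by
      rw [hWΔeq, Real.log_rpow (by norm_num)]
    have := phi2_pos hu0 hu1
    rw [hNDeq, hCdef, ← hWΔeq]
    nlinarith [hlogu]
  -- the algebraic identity for A
  set X := (2:ℝ) ^ Δ with hXdef
  have hX0 : 0 < X := two_rpow_pos Δ
  have hXu : X * W Δ = 1 := by
    rw [hXdef, hWΔeq, ← Real.rpow_add (by norm_num)]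
    simp
  have hlogX : Real.log X = Δ * Real.log 2 := by
    rw [hXdef, Real.log_rpow (by norm_num)]
  have hlogX1 : Real.log (X + 1) = Real.log X + Real.log (1 + W Δ) := by
    have hX1 : X + 1 = X * (1 + W Δ) := by rw [mul_add, mul_one, hXu]
    rw [hX1, Real.log_mul (ne_of_gt hX0) (by nlinarith)]
  set A := -(2:ℝ) ^ Δ * (2 * Real.log ((2:ℝ) ^ Δ + 1) - Real.log ((2:ℝ) ^ Δ) - 2 * Real.log 2) /
      (2 * (2:ℝ) ^ Δ * (Real.log ((2:ℝ) ^ Δ + 1) - Real.log ((2:ℝ) ^ Δ) - Real.log 2)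
        + (2:ℝ) ^ Δ - 1) with hAdef
  have hrsdef : rStarP Δ = Real.logb 2 A := rfl
  have hnumeq : -(2:ℝ) ^ Δ * (2 * Real.log ((2:ℝ) ^ Δ + 1) - Real.log ((2:ℝ) ^ Δ)
      - 2 * Real.log 2) = X * -(2 * ND) := by
    rw [← hXdef, hlogX1, hlogX, hNDeq]
    ring
  have hdeneq : 2 * (2:ℝ) ^ Δ * (Real.log ((2:ℝ) ^ Δ + 1) - Real.log ((2:ℝ) ^ Δ)
      - Real.log 2) + (2:ℝ) ^ Δ - 1 = X * -(C - 2 * ND) := by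
    rw [← hXdef, hlogX1, hlogX, hNDeq, hCdef, ← hWΔeq]
    linear_combination hXu
  have hAeq : A = 2 * ND / (C - 2 * ND) := by
    rw [hAdef, hnumeq, hdeneq, mul_div_mul_left _ _ (ne_of_gt hX0), neg_div_neg_eq]
  have hApos : 0 < A := by rw [hAeq]; exact div_pos (by linarith) pos1
  have hA1 : 1 < A := by
    rw [hAeq, lt_div_iff₀ pos1]; linarith
  have hrs_pos : 0 < rStarP Δ := by
    rw [hrsdef]; exact Real.logb_pos (by norm_num) hA1
  have hWrs : W (rStarP Δ) * (2 * ND) = C - 2 * ND := by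
    have h2rs : (2:ℝ) ^ rStarP Δ = A := by
      rw [hrsdef]; exact Real.rpow_logb (by norm_num) (by norm_num) hApos
    have : W (rStarP Δ) = A⁻¹ := by
      rw [W, Real.rpow_neg (by norm_num), h2rs]
    rw [this, hAeq, inv_div, div_mul_cancel₀ _ (by nlinarith : (2*ND : ℝ) ≠ 0)]
  clear_value C ND X A
  have hNds1 : ∀ x : ℝ, Nds 1 x = Real.log 2 * (1 - W x) / (2 * (1 + W x)) := by
    intro x
    have hWx := W_pos x
    unfold Nds
    field_simp
    ring
  have hder : ∀ x : ℝ, HasDerivAt (fun r => (W r + r * Real.log 2 - 1) / C - Nf 1 r / ND)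
      ((-(Real.log 2 * W x) + Real.log 2) / C - Nds 1 x / ND) x := by
    intro x
    have h1 : HasDerivAt (fun r : ℝ => (W r + r * Real.log 2 - 1) / C)
        ((-(Real.log 2 * W x) + Real.log 2) / C) x := by
      have := (((hasDerivAt_W x).add ((hasDerivAt_id x).mul_const (Real.log 2))).sub_const
        1).div_const C
      refine this.congr_deriv ?_
      ring
    exact h1.sub ((hasDerivAt_Nf_s 1 one_pos x).div_const ND)
  -- factored derivative and sign
  have hfact : ∀ x : ℝ, (-(Real.log 2 * W x) + Real.log 2) / C - Nds 1 x / ND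
      = Real.log 2 * (1 - W x) * (1 / C - 1 / (2 * ND * (1 + W x))) := by
    intro x
    have hWx := W_pos x
    rw [hNds1 x]
    field_simp
    ring
  have hsign_up : ∀ x : ℝ, 0 ≤ x → W (rStarP Δ) ≤ W x →
      0 ≤ (-(Real.log 2 * W x) + Real.log 2) / C - Nds 1 x / ND := by
    intro x hx hwx
    rw [hfact]
    have hW1 : W x ≤ 1 := W_le_one hx
    have hWx := W_pos x
    have hCle : C ≤ 2 * ND * (1 + W x) := by nlinarith
    have hbr : 1 / (2 * ND * (1 + W x)) ≤ 1 / C := by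
      apply one_div_le_one_div_of_le hC hCle
    apply mul_nonneg (by nlinarith) (by linarith)
  have hsign_down : ∀ x : ℝ, 0 ≤ x → W x ≤ W (rStarP Δ) →
      (-(Real.log 2 * W x) + Real.log 2) / C - Nds 1 x / ND ≤ 0 := by
    intro x hx hwx
    rw [hfact]
    have hW1 : W x ≤ 1 := W_le_one hx
    have hWx := W_pos x
    have hCge : 2 * ND * (1 + W x) ≤ C := by nlinarith
    have hbr : 1 / C ≤ 1 / (2 * ND * (1 + W x)) := by
      apply one_div_le_one_div_of_le (by nlinarith [W_pos x]) hCge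
    apply mul_nonpos_of_nonneg_of_nonpos (by nlinarith) (by linarith)
  rw [hfun s, hfun (rStarP Δ)]
  rcases le_or_gt s (rStarP Δ) with hcase | hcase
  · have hmono := monotoneOn_of_deriv_nonneg (convex_Icc 0 (rStarP Δ))
      (fun x hx => ((hder x).differentiableAt).continuousAt.continuousWithinAt)
      (fun x hx => ((hder x).differentiableAt).differentiableWithinAt)
      (fun x hx => by
        rw [interior_Icc] at hx
        rw [(hder x).deriv]
        exact hsign_up x hx.1.le (W_anti.antitone hx.2.le))
    exact hmono (mem_Icc.2 ⟨hs, hcase⟩) (right_mem_Icc.2 hrs_pos.le) hcase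
  · have hanti := antitoneOn_of_deriv_nonpos (convex_Icc (rStarP Δ) s)
      (fun x hx => ((hder x).differentiableAt).continuousAt.continuousWithinAt)
      (fun x hx => ((hder x).differentiableAt).differentiableWithinAt)
      (fun x hx => by
        rw [interior_Icc] at hx
        rw [(hder x).deriv]
        exact hsign_down x (le_trans hrs_pos.le hx.1.le) (W_anti.antitone hx.1.le))
    exact hanti (left_mem_Icc.2 hcase.le) (mem_Icc.2 ⟨hcase.le, le_refl s⟩) hcase.le

end LNSAux

open LNSAux in
theorem stmt_14 (ε Δ ΔP : ℝ) (hε : 0 ≤ ε) (hΔ : 0 < Δ) (hΔP : 0 < ΔP) (hΔPΔ : ΔP ≤ Δ)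
    (i c r rhat : ℝ) (hi : i ≤ 0) (hc : c ≤ 0)
    (hrhat0 : 0 ≤ rhat) (hrhatr : rhat ≤ r) (hrΔ : r < Δ) (hround : r - rhat ≤ ΔP)
    (a b e p m q : ℝ)
    (ha : |a - Phip i| ≤ ε)
    (hb : |b - dPhip i| ≤ ε)
    (he : |e - Ep i Δ| ≤ ε)
    (hp : |p - Qp Δ c rhat| ≤ ε)
    (hp1 : |p| ≤ 1)
    (hm : |m - r * b| ≤ ε)
    (hq : |q - e * p| ≤ ε) :
    |Phip (i - r) - (a - m + q)| ≤
      (4 + Δ) * ε +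
        Ep 0 Δ * ((QpSup Δ (rStarP Δ) - QpMin Δ (rStarP Δ))
          + (1 - Qp Δ 0 (Δ - ΔP)) + ε) := by
  set QR := QpSup Δ (rStarP Δ) - QpMin Δ (rStarP Δ) with hQR
  set QI := 1 - Qp Δ 0 (Δ - ΔP) with hQI
  have hr0 : 0 ≤ r := le_trans hrhat0 hrhatr
  have hrΔ' : r ≤ Δ := hrΔ.le
  have hrhatΔ : rhat ≤ Δ := le_trans hrhatr hrΔ'
  have hEiΔ : 0 < Ep i Δ := Ep_pos hΔ
  have hE0Δ : 0 < Ep 0 Δ := Ep_pos hΔ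
  have hEle : Ep i Δ ≤ Ep 0 Δ := Ep_le_Ep0 hi hΔ
  -- key ratio bound
  have key : |Qp Δ i r - Qp Δ c rhat| ≤ QR + QI := by
    have h1 : Qp Δ i r ≤ QpSup Δ r := qp_le_qpSup hi hr0 hrΔ' hΔ
    have h2 : QpMin Δ rhat ≤ Qp Δ c rhat := qpMin_le_qp hc hrhat0 hrhatΔ hΔ
    have h3 : QpMin Δ r ≤ Qp Δ i r := qpMin_le_qp hi hr0 hrΔ' hΔ
    have h4 : Qp Δ c rhat ≤ QpSup Δ rhat := qp_le_qpSup hc hrhat0 hrhatΔ hΔ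
    have h5 : QpSup Δ r - QpMin Δ r ≤ QR := qdiff_le hΔ hr0 hrΔ'
    have h6 : QpMin Δ r - QpMin Δ rhat ≤ QI := qpMin_inc hΔP hΔPΔ hrhat0 hrhatr hrΔ' hround
    have h7 : QpSup Δ rhat ≤ QpSup Δ r := qpSup_mono hΔ hrhat0 hrhatr
    have h8 : 0 ≤ QI := qI_nonneg hΔ hΔP hΔPΔ
    rw [abs_le]; constructor <;> nlinarith
  have hQRQI : 0 ≤ QR + QI := le_trans (abs_nonneg _) key
  have hEq : Ep i r = Ep i Δ * Qp Δ i r := by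
    rw [Qp, mul_div_cancel₀ _ (ne_of_gt hEiΔ)]
  have e1 : |Phip i - a| ≤ ε := by rw [abs_sub_comm]; exact ha
  have e2 : |m - r * dPhip i| ≤ ε + Δ * ε := by
    have : |m - r * dPhip i| ≤ |m - r * b| + |r * b - r * dPhip i| := by
      have := abs_sub_le (m) (r*b) (r * dPhip i); linarith
    have h2 : |r * b - r * dPhip i| = r * |b - dPhip i| := by
      rw [← mul_sub, abs_mul, abs_of_nonneg hr0]
    have h3 : r * |b - dPhip i| ≤ Δ * ε := by
      apply mul_le_mul hrΔ' hb (abs_nonneg _) (le_of_lt hΔ)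
    rw [h2] at this; linarith
  have e3 : |Ep i r - q| ≤ Ep 0 Δ * (QR + QI) + Ep 0 Δ * ε + 2 * ε := by
    have t1 : |Ep i r - Ep i Δ * Qp Δ c rhat| ≤ Ep 0 Δ * (QR + QI) := by
      rw [hEq, ← mul_sub, abs_mul, abs_of_pos hEiΔ]
      calc Ep i Δ * |Qp Δ i r - Qp Δ c rhat| ≤ Ep i Δ * (QR + QI) :=
            mul_le_mul_of_nonneg_left key (le_of_lt hEiΔ)
        _ ≤ Ep 0 Δ * (QR + QI) := mul_le_mul_of_nonneg_right hEle hQRQI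
    have t2 : |Ep i Δ * Qp Δ c rhat - e * p| ≤ Ep 0 Δ * ε + ε := by
      have heq : Ep i Δ * Qp Δ c rhat - e * p
          = Ep i Δ * (Qp Δ c rhat - p) + p * (Ep i Δ - e) := by ring
      rw [heq]
      have u1 : |Ep i Δ * (Qp Δ c rhat - p)| ≤ Ep 0 Δ * ε := by
        rw [abs_mul, abs_of_pos hEiΔ, abs_sub_comm]
        calc Ep i Δ * |p - Qp Δ c rhat| ≤ Ep i Δ * ε :=
              mul_le_mul_of_nonneg_left hp (le_of_lt hEiΔ)
          _ ≤ Ep 0 Δ * ε := mul_le_mul_of_nonneg_right hEle hε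
      have u2 : |p * (Ep i Δ - e)| ≤ ε := by
        rw [abs_mul, abs_sub_comm]
        calc |p| * |e - Ep i Δ| ≤ 1 * ε :=
              mul_le_mul hp1 he (abs_nonneg _) (by norm_num)
          _ = ε := one_mul ε
      calc |Ep i Δ * (Qp Δ c rhat - p) + p * (Ep i Δ - e)|
          ≤ |Ep i Δ * (Qp Δ c rhat - p)| + |p * (Ep i Δ - e)| := abs_add_le _ _
        _ ≤ Ep 0 Δ * ε + ε := add_le_add u1 u2
    have t3 : |e * p - q| ≤ ε := by rw [abs_sub_comm]; exact hq
    calc |Ep i r - q| ≤ |Ep i r - Ep i Δ * Qp Δ c rhat| + |Ep i Δ * Qp Δ c rhat - e * p|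
          + |e * p - q| := by
          have h1 := abs_sub_le (Ep i r) (Ep i Δ * Qp Δ c rhat) q
          have h2 := abs_sub_le (Ep i Δ * Qp Δ c rhat) (e*p) q
          linarith
      _ ≤ Ep 0 Δ * (QR + QI) + (Ep 0 Δ * ε + ε) + ε := by
          exact add_le_add (add_le_add t1 t2) t3
      _ = Ep 0 Δ * (QR + QI) + Ep 0 Δ * ε + 2 * ε := by ring
  have hdecomp : Phip (i - r) - (a - m + q)
      = (Phip i - a) + (m - r * dPhip i) + (Ep i r - q) := by
    have : Phip (i - r) = Phip i - r * dPhip i + Ep i r := by unfold Ep; ring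
    rw [this]; ring
  calc |Phip (i - r) - (a - m + q)|
      ≤ |Phip i - a| + |m - r * dPhip i| + |Ep i r - q| := by
        rw [hdecomp]; exact abs_add_three _ _ _
    _ ≤ ε + (ε + Δ * ε) + (Ep 0 Δ * (QR + QI) + Ep 0 Δ * ε + 2 * ε) :=
        add_le_add (add_le_add e1 e2) e3
    _ = (4 + Δ) * ε + Ep 0 Δ * (QR + QI + ε) := by ring
end
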